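/- The generalized bounding number 𝔟_κ equals the minimum cardinality of a family 𝒜 of clubs in κ that is unbounded in (Cub_κ, ⊇*), i.e., such that no club is almost contained in every member of 𝒜. -/

import Mathlib

open Cardinal Set

namespace PaperFormal

/-- `A` is unbounded in `κ` (as a set of ordinals below `κ`). -/
def UnboundedIn (κ : Ordinal.{0}) (A : Set Ordinal) : Prop :=
  ∀ α < κ, ∃ β ∈ A, α ≤ β

/-- `A ⊆* B`: almost inclusion (mod bounded) below `κ`. -/
def AlmostSub (κ : Ordinal.{0}) (A B : Set Ordinal) : Prop :=
  ∃ α < κ, ∀ β ∈ A, α ≤ β → β ∈ B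

/-- `C` is closed in `κ`. -/
def ClosedIn (κ : Ordinal.{0}) (C : Set Ordinal) : Prop :=
  ∀ α, α < κ → α ≠ 0 → (∀ β < α, (C ∩ Set.Ioo β α).Nonempty) → α ∈ C

/-- `C` is a club (closed unbounded set) in `κ`. -/
def IsClub (κ : Ordinal.{0}) (C : Set Ordinal) : Prop :=
  C ⊆ Set.Iio κ ∧ UnboundedIn κ C ∧ ClosedIn κ C

/-- `f` maps `κ` into `κ`. -/
def FunOn (κ : Ordinal.{0}) (f : Ordinal → Ordinal) : Prop :=
  ∀ β < κ, f β < κ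

/-- almost everywhere domination `f ≤* g` on `κ`. -/
def LeStar (κ : Ordinal.{0}) (f g : Ordinal → Ordinal) : Prop :=
  ∃ α < κ, ∀ β, α ≤ β → β < κ → f β ≤ g β

def UnboundedFunFam (κ : Ordinal.{0}) (𝒜 : Set (Ordinal → Ordinal)) : Prop :=
  (∀ f ∈ 𝒜, FunOn κ f) ∧ ∀ g, FunOn κ g → ∃ f ∈ 𝒜, ¬ LeStar κ f g

def DominatingFunFam (κ : Ordinal.{0}) (𝒜 : Set (Ordinal → Ordinal)) : Prop :=
  (∀ f ∈ 𝒜, FunOn κ f) ∧ ∀ g, FunOn κ g → ∃ f ∈ 𝒜, LeStar κ g f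

/-- the generalized bounding number `𝔟_κ`. -/
noncomputable def bNum (κ : Ordinal.{0}) : Cardinal :=
  sInf { μ : Cardinal.{0} | ∃ 𝒜, UnboundedFunFam κ 𝒜 ∧ #𝒜 = Cardinal.lift.{1} μ }

/-- the generalized dominating number `𝔡_κ`. -/
noncomputable def dNum (κ : Ordinal.{0}) : Cardinal :=
  sInf { μ : Cardinal.{0} | ∃ 𝒜, DominatingFunFam κ 𝒜 ∧ #𝒜 = Cardinal.lift.{1} μ }

/-- a (proper) filter on `κ`. -/
structure IsKFilter (κ : Ordinal.{0}) (F : Set (Set Ordinal)) : Prop where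
  subset : ∀ A ∈ F, A ⊆ Set.Iio κ
  univ_mem : Set.Iio κ ∈ F
  upward : ∀ A ∈ F, ∀ B, B ⊆ Set.Iio κ → A ⊆ B → B ∈ F
  inter : ∀ A ∈ F, ∀ B ∈ F, A ∩ B ∈ F
  proper : ∅ ∉ F

/-- an ultrafilter on `κ`. -/
structure IsKUltrafilter (κ : Ordinal.{0}) (U : Set (Set Ordinal)) extends IsKFilter κ U : Prop where
  decide : ∀ A, A ⊆ Set.Iio κ → A ∈ U ∨ (Set.Iio κ \ A) ∈ U

/-- uniformity: every member is unbounded (equivalently, for regular `κ`, of size `κ`). -/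
def Uniform (κ : Ordinal.{0}) (F : Set (Set Ordinal)) : Prop :=
  ∀ A ∈ F, UnboundedIn κ A

/-- `κ`-completeness. -/
def KComplete (κ : Ordinal.{0}) (F : Set (Set Ordinal)) : Prop :=
  ∀ s : Set (Set Ordinal), s ⊆ F → s.Nonempty → #s < Cardinal.lift.{1} κ.card → ⋂₀ s ∈ F

/-- closure under diagonal intersections. -/
def DiagClosed (κ : Ordinal.{0}) (F : Set (Set Ordinal)) : Prop :=
  ∀ A : Ordinal → Set Ordinal, (∀ i < κ, A i ∈ F) →
    {β | β < κ ∧ ∀ i < β, β ∈ A i} ∈ F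

/-- a normal ultrafilter on `κ`: `κ`-complete, contains all clubs, closed under
diagonal intersections. -/
def NormalUF (κ : Ordinal.{0}) (U : Set (Set Ordinal)) : Prop :=
  IsKUltrafilter κ U ∧ Uniform κ U ∧ KComplete κ U ∧
    (∀ C, IsClub κ C → C ∈ U) ∧ DiagClosed κ U

/-- `ℬ` is a `⊆*`-base for `F`. -/
def IsBase (κ : Ordinal.{0}) (F ℬ : Set (Set Ordinal)) : Prop :=
  ℬ ⊆ F ∧ ∀ A ∈ F, ∃ B ∈ ℬ, AlmostSub κ B A

/-- the character of a filter. -/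
noncomputable def chNum (κ : Ordinal.{0}) (F : Set (Set Ordinal)) : Cardinal :=
  sInf { μ : Cardinal.{0} | ∃ ℬ, IsBase κ F ℬ ∧ #ℬ = Cardinal.lift.{1} μ }

/-- there is a `⊆*`-decreasing `λ`-sequence in `F` with no `⊆*`-lower bound in `F`. -/
def HasTower (κ : Ordinal.{0}) (F : Set (Set Ordinal)) (lam : Cardinal) : Prop :=
  ∃ S : Ordinal → Set Ordinal, (∀ i < lam.ord, S i ∈ F) ∧
    (∀ i j, i < j → j < lam.ord → AlmostSub κ (S j) (S i)) ∧
    ¬ ∃ Y ∈ F, ∀ i < lam.ord, AlmostSub κ Y (S i)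

/-- the depth `𝔱(F)` of a filter. -/
noncomputable def tNum (κ : Ordinal.{0}) (F : Set (Set Ordinal)) : Cardinal :=
  sInf { μ : Cardinal.{0} | μ.IsRegular ∧ HasTower κ F μ }

/-- the ultrafilter number `𝔲_κ`. -/
noncomputable def uNum (κ : Ordinal.{0}) : Cardinal :=
  sInf { μ : Cardinal.{0} | ∃ U, IsKUltrafilter κ U ∧ Uniform κ U ∧ chNum κ U = μ }

/-- the complete ultrafilter number `𝔲^com_κ`. -/
noncomputable def uComNum (κ : Ordinal.{0}) : Cardinal :=
  sInf { μ : Cardinal.{0} | ∃ U, IsKUltrafilter κ U ∧ Uniform κ U ∧ KComplete κ U ∧ chNum κ U = μ }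

/-- `U` is a simple `P_λ`-point: a uniform ultrafilter with a `⊆*`-decreasing
generating sequence of length `λ`. -/
def SimplePPoint (κ : Ordinal.{0}) (lam : Cardinal) (U : Set (Set Ordinal)) : Prop :=
  IsKUltrafilter κ U ∧ Uniform κ U ∧
    ∃ S : Ordinal → Set Ordinal, (∀ i < lam.ord, S i ∈ U) ∧
      (∀ i j, i < j → j < lam.ord → AlmostSub κ (S j) (S i)) ∧
      ∀ A ∈ U, ∃ i < lam.ord, AlmostSub κ (S i) A

/-- a `⊆*`-decreasing generating sequence of length `λ` for a filter `F`. -/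
def SimplePFilter (κ : Ordinal.{0}) (lam : Cardinal) (F : Set (Set Ordinal)) : Prop :=
  ∃ S : Ordinal → Set Ordinal, (∀ i < lam.ord, S i ∈ F) ∧
    (∀ i j, i < j → j < lam.ord → AlmostSub κ (S j) (S i)) ∧
    ∀ A ∈ F, ∃ i < lam.ord, AlmostSub κ (S i) A

/-- `ℬ` is a `π`-base for `U`: unbounded sets, almost contained in members of `U`. -/
def IsPiBase (κ : Ordinal.{0}) (U ℬ : Set (Set Ordinal)) : Prop :=
  (∀ B ∈ ℬ, B ⊆ Set.Iio κ ∧ UnboundedIn κ B) ∧ ∀ A ∈ U, ∃ B ∈ ℬ, AlmostSub κ B A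

/-- the `π`-character `πch(U)`. -/
noncomputable def piChNum (κ : Ordinal.{0}) (U : Set (Set Ordinal)) : Cardinal :=
  sInf { μ : Cardinal.{0} | ∃ ℬ, IsPiBase κ U ℬ ∧ #ℬ = Cardinal.lift.{1} μ }

/-- `Y` is a pseudo-intersection of the family `𝒜`. -/
def IsPseudoInter (κ : Ordinal.{0}) (𝒜 : Set (Set Ordinal)) (Y : Set Ordinal) : Prop :=
  Y ⊆ Set.Iio κ ∧ UnboundedIn κ Y ∧ ∀ A ∈ 𝒜, AlmostSub κ Y A

/-- `π𝔭(U)`: the least size of a subfamily of `U` with no pseudo-intersection. -/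
noncomputable def piPNum (κ : Ordinal.{0}) (U : Set (Set Ordinal)) : Cardinal :=
  sInf { μ : Cardinal.{0} | ∃ 𝒜, 𝒜 ⊆ U ∧ #𝒜 = Cardinal.lift.{1} μ ∧ ¬ ∃ Y, IsPseudoInter κ 𝒜 Y }

/-- a `⊆*`-decreasing `λ`-sequence in `U` unbounded in `([κ]^κ, ⊇*)`. -/
def HasPiTower (κ : Ordinal.{0}) (U : Set (Set Ordinal)) (lam : Cardinal) : Prop :=
  ∃ S : Ordinal → Set Ordinal, (∀ i < lam.ord, S i ∈ U) ∧
    (∀ i j, i < j → j < lam.ord → AlmostSub κ (S j) (S i)) ∧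
    ¬ ∃ Y, Y ⊆ Set.Iio κ ∧ UnboundedIn κ Y ∧ ∀ i < lam.ord, AlmostSub κ Y (S i)

/-- `π𝔱(U)`. -/
noncomputable def piTNum (κ : Ordinal.{0}) (U : Set (Set Ordinal)) : Cardinal :=
  sInf { μ : Cardinal.{0} | μ.IsRegular ∧ HasPiTower κ U μ }

/-- `A` splits `B`. -/
def Splits (κ : Ordinal.{0}) (A B : Set Ordinal) : Prop :=
  UnboundedIn κ (B ∩ A) ∧ UnboundedIn κ (B \ A)

/-- the splitting number `𝔰_κ`. -/
noncomputable def sNum (κ : Ordinal.{0}) : Cardinal :=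
  sInf { μ : Cardinal.{0} | ∃ 𝒜 : Set (Set Ordinal), (∀ A ∈ 𝒜, A ⊆ Set.Iio κ) ∧
    (∀ X, X ⊆ Set.Iio κ → UnboundedIn κ X → ∃ A ∈ 𝒜, Splits κ A X) ∧ #𝒜 = Cardinal.lift.{1} μ }

/-- the reaping number `𝔯_κ`. -/
noncomputable def rNum (κ : Ordinal.{0}) : Cardinal :=
  sInf { μ : Cardinal.{0} | ∃ 𝒜 : Set (Set Ordinal), (∀ A ∈ 𝒜, A ⊆ Set.Iio κ ∧ UnboundedIn κ A) ∧
    (¬ ∃ X, X ⊆ Set.Iio κ ∧ ∀ A ∈ 𝒜, Splits κ X A) ∧ #𝒜 = Cardinal.lift.{1} μ }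

/-- `f` is almost one-to-one modulo `U`: bounded-to-one on a set in `U`. -/
def AlmostInjMod (κ : Ordinal.{0}) (U : Set (Set Ordinal)) (f : Ordinal → Ordinal) : Prop :=
  ∃ X ∈ U, ∀ γ < κ, ∃ α < κ, ∀ β ∈ X, f β = γ → β < α

/-- the pushforward `f_*(U)`. -/
def PushFwd (κ : Ordinal.{0}) (f : Ordinal → Ordinal) (U : Set (Set Ordinal)) :
    Set (Set Ordinal) :=
  { A | A ⊆ Set.Iio κ ∧ (Set.Iio κ ∩ f ⁻¹' A) ∈ U }

/-- countable completeness. -/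
def CountablyComplete (U : Set (Set Ordinal)) : Prop :=
  ∀ s : Set (Set Ordinal), s ⊆ U → s.Countable → s.Nonempty → ⋂₀ s ∈ U


/-- `𝔟_κ` is the least size of a family of clubs in `κ` that is unbounded
in `(Cub_κ, ⊇*)`. -/
-- auxiliary: next element of C strictly above β
noncomputable def nextIn (C : Set Ordinal) (β : Ordinal) : Ordinal :=
  sInf (C ∩ Set.Ioi β)

-- closure points of f below k
def clpts (k : Ordinal.{0}) (f : Ordinal → Ordinal) : Set Ordinal :=
  {β | β < k ∧ β ≠ 0 ∧ ∀ γ < β, f γ < β}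

section facts
variable {κ : Cardinal.{0}} (hreg : κ.IsRegular) (hunc : Cardinal.aleph0 < κ)

lemma succ_lt_k (hunc : Cardinal.aleph0 < κ) {a : Ordinal} (h : a < κ.ord) : a + 1 < κ.ord := by
  rw [Ordinal.add_one_eq_succ]
  exact (Cardinal.isSuccLimit_ord hunc.le).succ_lt h

lemma nextIn_spec (hunc : Cardinal.aleph0 < κ) {C : Set Ordinal} (hC : IsClub κ.ord C)
    {β : Ordinal} (hβ : β < κ.ord) :
    nextIn C β ∈ C ∧ β < nextIn C β ∧ nextIn C β < κ.ord := by
  have hne : (C ∩ Set.Ioi β).Nonempty := by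
    obtain ⟨δ, hδC, hδ⟩ := hC.2.1 (β + 1) (succ_lt_k hunc hβ)
    exact ⟨δ, hδC, lt_of_lt_of_le (by rw [Ordinal.add_one_eq_succ]; exact Order.lt_succ β) hδ⟩
  have hmem := csInf_mem hne
  exact ⟨hmem.1, hmem.2, hC.1 hmem.1⟩

lemma nextIn_funOn (hunc : Cardinal.aleph0 < κ) {C : Set Ordinal} (hC : IsClub κ.ord C) :
    FunOn κ.ord (nextIn C) := fun β hβ => (nextIn_spec hunc hC hβ).2.2

lemma clpts_club (hreg : κ.IsRegular) (hunc : Cardinal.aleph0 < κ)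
    {f : Ordinal → Ordinal} (hf : FunOn κ.ord f) : IsClub κ.ord (clpts κ.ord f) := by
  have hcof : κ.ord.cof = κ := hreg.cof_eq
  refine ⟨fun β hβ => hβ.1, ?_, ?_⟩
  · -- unbounded
    intro α hα
    set F : Ordinal → Ordinal := fun x => max (x + 1) (Ordinal.bsup x (fun γ _ => f γ + 1)) with hF
    have hFlt : ∀ x < κ.ord, F x < κ.ord := by
      intro x hx
      apply max_lt (succ_lt_k hunc hx)
      apply Ordinal.bsup_lt_ord (by rw [hcof]; exact Cardinal.lt_ord.mp hx)
      intro γ hγ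
      exact succ_lt_k hunc (hf γ (hγ.trans hx))
    set s : ℕ → Ordinal := fun n => F^[n] (α + 1) with hs
    have hslt : ∀ n, s n < κ.ord := by
      intro n
      induction n with
      | zero => exact succ_lt_k hunc hα
      | succ n ih =>
        have : s (n + 1) = F (s n) := Function.iterate_succ_apply' F n (α + 1)
        rw [this]; exact hFlt _ ih
    set β := ⨆ n, s n with hβdef
    have hβk : β < κ.ord := by
      apply Ordinal.iSup_lt_ord_lift.{0,0} _ hslt
      rw [hcof, Cardinal.lift_id, Cardinal.mk_eq_aleph0]; exact hunc
    have hαβ : α < β := by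
      have h0 : α < s 0 := by
        simp only [hs, Function.iterate_zero, id_eq]
        rw [Ordinal.add_one_eq_succ]; exact Order.lt_succ α
      exact h0.trans_le (Ordinal.le_iSup s 0)
    refine ⟨β, ⟨hβk, ?_, ?_⟩, hαβ.le⟩
    · exact fun h => by simp [h] at hαβ
    · intro γ hγ
      obtain ⟨n, hn⟩ := Ordinal.lt_iSup_iff.mp hγ
      have h1 : f γ + 1 ≤ Ordinal.bsup (s n) (fun δ _ => f δ + 1) :=
        Ordinal.le_bsup (fun δ _ => f δ + 1) γ hn
      have h2 : Ordinal.bsup (s n) (fun δ _ => f δ + 1) ≤ F (s n) := le_max_right _ _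
      have h3 : F (s n) = s (n + 1) := (Function.iterate_succ_apply' F n (α + 1)).symm
      have h4 : s (n + 1) ≤ β := Ordinal.le_iSup s (n + 1)
      have : f γ + 1 ≤ β := le_trans h1 (le_trans h2 (h3 ▸ h4))
      rw [Ordinal.add_one_eq_succ, Order.succ_le_iff] at this
      exact this
  · -- closed
    intro α hα hα0 hcl
    refine ⟨hα, hα0, ?_⟩
    intro γ hγ
    obtain ⟨δ, hδmem, hδγ, hδα⟩ := hcl γ hγ
    exact lt_trans (hδmem.2.2 γ hδγ) hδα

-- key1 : if nextIn C ≤* g then clpts g ⊆* C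
lemma key1 (hunc : Cardinal.aleph0 < κ) {C : Set Ordinal} (hC : IsClub κ.ord C)
    {g : Ordinal → Ordinal} (h : LeStar κ.ord (nextIn C) g) :
    AlmostSub κ.ord (clpts κ.ord g) C := by
  obtain ⟨α₀, hα₀, hdom⟩ := h
  refine ⟨α₀ + 1, succ_lt_k hunc hα₀, ?_⟩
  rintro β ⟨hβk, hβ0, hβcl⟩ hle
  have hα₀β : α₀ < β := by
    rw [Ordinal.add_one_eq_succ, Order.succ_le_iff] at hle; exact hle
  apply hC.2.2 β hβk hβ0
  intro γ hγ
  have hγ' : max γ α₀ < β := max_lt hγ hα₀β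
  have hγ'k : max γ α₀ < κ.ord := hγ'.trans hβk
  obtain ⟨hdC, hdlt, hdk⟩ := nextIn_spec hunc hC hγ'k
  have hgd : nextIn C (max γ α₀) ≤ g (max γ α₀) := hdom _ (le_max_right _ _) hγ'k
  have : g (max γ α₀) < β := hβcl _ hγ'
  exact ⟨nextIn C (max γ α₀), hdC, lt_of_le_of_lt (le_max_left γ α₀) hdlt,
    lt_of_le_of_lt hgd this⟩

-- key2 : if C ⊆* clpts f then f ≤* nextIn C
lemma key2 (hunc : Cardinal.aleph0 < κ) {C : Set Ordinal} (hC : IsClub κ.ord C)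
    {f : Ordinal → Ordinal} (h : AlmostSub κ.ord C (clpts κ.ord f)) :
    LeStar κ.ord f (nextIn C) := by
  obtain ⟨α₀, hα₀, hsub⟩ := h
  refine ⟨α₀, hα₀, ?_⟩
  intro β hαβ hβ
  obtain ⟨hdC, hdlt, hdk⟩ := nextIn_spec hunc hC hβ
  have hd : nextIn C β ∈ clpts κ.ord f := hsub _ hdC (hαβ.trans hdlt.le)
  exact (hd.2.2 β hdlt).le

end facts

variable {κ : Cardinal.{0}}

lemma mapA (hreg : κ.IsRegular) (hunc : Cardinal.aleph0 < κ)
    {𝒜 : Set (Set Ordinal)} (hclub : ∀ A ∈ 𝒜, IsClub κ.ord A)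
    (hub : ¬ ∃ C, IsClub κ.ord C ∧ ∀ A ∈ 𝒜, AlmostSub κ.ord C A) :
    ∃ ℬ : Set (Ordinal → Ordinal), UnboundedFunFam κ.ord ℬ ∧ #ℬ ≤ #𝒜 := by
  refine ⟨(fun C => nextIn C) '' 𝒜, ⟨?_, ?_⟩, Cardinal.mk_image_le⟩
  · rintro f ⟨A, hA, rfl⟩
    exact nextIn_funOn hunc (hclub A hA)
  · intro g hg
    by_contra hcon
    push_neg at hcon
    apply hub
    refine ⟨clpts κ.ord g, clpts_club hreg hunc hg, ?_⟩
    intro A hA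
    exact key1 hunc (hclub A hA) (hcon (nextIn A) ⟨A, hA, rfl⟩)

lemma mapB (hreg : κ.IsRegular) (hunc : Cardinal.aleph0 < κ)
    {𝒜 : Set (Ordinal → Ordinal)} (h𝒜 : UnboundedFunFam κ.ord 𝒜) :
    ∃ 𝒞 : Set (Set Ordinal), (∀ A ∈ 𝒞, IsClub κ.ord A) ∧
      (¬ ∃ C, IsClub κ.ord C ∧ ∀ A ∈ 𝒞, AlmostSub κ.ord C A) ∧ #𝒞 ≤ #𝒜 := by
  refine ⟨(fun f => clpts κ.ord f) '' 𝒜, ?_, ?_, Cardinal.mk_image_le⟩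
  · rintro A ⟨f, hf, rfl⟩
    exact clpts_club hreg hunc (h𝒜.1 f hf)
  · rintro ⟨C, hC, hall⟩
    obtain ⟨f, hf, hnle⟩ := h𝒜.2 (nextIn C) (nextIn_funOn hunc hC)
    exact hnle (key2 hunc hC (hall _ ⟨f, hf, rfl⟩))

lemma S_nonempty (hreg : κ.IsRegular) (hunc : Cardinal.aleph0 < κ) :
    { μ : Cardinal.{0} | ∃ 𝒜, UnboundedFunFam κ.ord 𝒜 ∧ #𝒜 = Cardinal.lift.{1} μ }.Nonempty := by
  set 𝒜 : Set (Ordinal → Ordinal) :=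
    {f | (∀ β < κ.ord, f β < κ.ord) ∧ ∀ β, ¬ β < κ.ord → f β = 0} with h𝒜
  have hubf : UnboundedFunFam κ.ord 𝒜 := by
    constructor
    · exact fun f hf => hf.1
    · intro g hg
      refine ⟨fun β => if β < κ.ord then g β + 1 else 0, ⟨?_, ?_⟩, ?_⟩
      · intro β hβ; simp only [if_pos hβ]; exact succ_lt_k hunc (hg β hβ)
      · intro β hβ; simp only [if_neg hβ]
      · rintro ⟨α, hα, hdom⟩
        have := hdom α le_rfl hα
        simp only [if_pos hα] at this
        rw [Ordinal.add_one_eq_succ, Order.succ_le_iff] at this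
        exact lt_irrefl _ this
  have hcard : #𝒜 ≤ Cardinal.lift.{1} (κ ^ κ) := by
    have hinj : Function.Injective
        (fun f : 𝒜 => (fun x : Set.Iio κ.ord => (⟨f.1 x, f.2.1 x x.2⟩ : Set.Iio κ.ord))) := by
      rintro ⟨f, hf⟩ ⟨g, hg⟩ h
      simp only at h
      ext1
      funext β
      by_cases hβ : β < κ.ord
      · show f β = g β
        exact congrArg Subtype.val (congrFun h ⟨β, hβ⟩)
      · show f β = g β
        rw [hf.2 β hβ, hg.2 β hβ]
    have h1 : #𝒜 ≤ #(Set.Iio κ.ord → Set.Iio κ.ord) := Cardinal.mk_le_of_injective hinj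
    have h2 : #(Set.Iio κ.ord) = Cardinal.lift.{1} κ := by
      rw [Ordinal.mk_Iio_ordinal, Cardinal.card_ord]
    calc #𝒜 ≤ #(Set.Iio κ.ord → Set.Iio κ.ord) := h1
      _ = #(Set.Iio κ.ord) ^ #(Set.Iio κ.ord) := (Cardinal.power_def _ _).symm
      _ = Cardinal.lift.{1} κ ^ Cardinal.lift.{1} κ := by rw [h2]
      _ = Cardinal.lift.{1} (κ ^ κ) := (Cardinal.lift_power κ κ).symm
  obtain ⟨μ, hμ⟩ := Cardinal.mem_range_lift_of_le hcard
  exact ⟨μ, 𝒜, hubf, hμ.symm⟩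

theorem stmt2 (κ : Cardinal.{0}) (hreg : κ.IsRegular) (hunc : Cardinal.aleph0 < κ) :
    bNum κ.ord = sInf { μ : Cardinal.{0} | ∃ 𝒜 : Set (Set Ordinal),
      (∀ A ∈ 𝒜, IsClub κ.ord A) ∧
      (¬ ∃ C, IsClub κ.ord C ∧ ∀ A ∈ 𝒜, AlmostSub κ.ord C A) ∧
      #𝒜 = Cardinal.lift.{1} μ } := by
  set S := { μ : Cardinal.{0} | ∃ 𝒜, UnboundedFunFam κ.ord 𝒜 ∧ #𝒜 = Cardinal.lift.{1} μ } with hSdef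
  set T := { μ : Cardinal.{0} | ∃ 𝒜 : Set (Set Ordinal),
      (∀ A ∈ 𝒜, IsClub κ.ord A) ∧
      (¬ ∃ C, IsClub κ.ord C ∧ ∀ A ∈ 𝒜, AlmostSub κ.ord C A) ∧
      #𝒜 = Cardinal.lift.{1} μ } with hTdef
  have hS : S.Nonempty := S_nonempty hreg hunc
  have hmapA : ∀ μ ∈ T, ∃ ν ∈ S, ν ≤ μ := by
    rintro μ ⟨𝒜, hclub, hub, hcard⟩
    obtain ⟨ℬ, hℬ, hle⟩ := mapA hreg hunc hclub hub
    obtain ⟨ν, hν⟩ := Cardinal.mem_range_lift_of_le (hle.trans_eq hcard)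
    exact ⟨ν, ⟨ℬ, hℬ, hν.symm⟩, by
      rw [← Cardinal.lift_le.{1}, hν]; exact hle.trans_eq hcard⟩
  have hmapB : ∀ μ ∈ S, ∃ ν ∈ T, ν ≤ μ := by
    rintro μ ⟨𝒜, h𝒜, hcard⟩
    obtain ⟨𝒞, hclub, hub, hle⟩ := mapB hreg hunc h𝒜
    obtain ⟨ν, hν⟩ := Cardinal.mem_range_lift_of_le (hle.trans_eq hcard)
    exact ⟨ν, ⟨𝒞, hclub, hub, hν.symm⟩, by
      rw [← Cardinal.lift_le.{1}, hν]; exact hle.trans_eq hcard⟩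
  have hT : T.Nonempty := by
    obtain ⟨μ, hμ⟩ := hS
    obtain ⟨ν, hν, _⟩ := hmapB μ hμ
    exact ⟨ν, hν⟩
  apply le_antisymm
  · apply le_csInf hT
    intro μ hμ
    obtain ⟨ν, hν, hle⟩ := hmapA μ hμ
    exact (csInf_le' hν).trans hle
  · apply le_csInf hS
    intro μ hμ
    obtain ⟨ν, hν, hle⟩ := hmapB μ hμ
    exact (csInf_le' hν).trans hle

end PaperFormal
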